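/- For positive integers $d_0, d_1, d_2, d_3$ with $d_1 \leq d_0$, $d_2 \leq d_0$, $d_3 \leq d_0 \leq d_1 + d_3$, $d_0 \leq d_2 + d_3$, and $d_3 \leq d_1 + d_2 + d_3 - d_0$, the expression $\frac{[d_1]_q\,[d_2+d_3]_q}{[d_0]_q\,[d_1+d_2+d_3-d_0]_q}\genfrac{[}{]}{0pt}{}{d_3}{d_0-d_1}_q \genfrac{[}{]}{0pt}{}{d_3}{d_0-d_2}_q \genfrac{[}{]}{0pt}{}{d_0}{d_3}_q \genfrac{[}{]}{0pt}{}{d_1+d_2+d_3-d_0}{d_3}_q$, a priori an element of $\mathbb{Q}(q^{1/2})$, lies in $\mathbb{Z}[q^{1/2}, q^{-1/2}]$ (it is a Laurent polynomial with zeroes and poles only at $q = 0$, $\infty$, or roots of unity — in fact a Laurent polynomial). -/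

import Mathlib

noncomputable def qint (t : RatFunc ℚ) (n : ℤ) : RatFunc ℚ := t ^ n - t ^ (-n)

noncomputable def qfact (t : RatFunc ℚ) (n : ℤ) : RatFunc ℚ :=
  ∏ i ∈ Finset.range n.toNat, qint t ((i : ℤ) + 1)

noncomputable def qbinom (t : RatFunc ℚ) (n m : ℤ) : RatFunc ℚ :=
  if 0 ≤ m ∧ m ≤ n then qfact t n / (qfact t m * qfact t (n - m)) else 0

open Polynomial Finset

set_option maxHeartbeats 4000000


private lemma key_split (m x y z : ℕ) (hm : 0 < m) (h : x + y = z) :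
    (x % m + y % m = z % m ∧ x / m + y / m = z / m) ∨
    (x % m + y % m = z % m + m ∧ x / m + y / m + 1 = z / m) := by
  have hx := Nat.div_add_mod x m
  have hy := Nat.div_add_mod y m
  have hz := Nat.div_add_mod z m
  have hxm := Nat.mod_lt x hm
  have hym := Nat.mod_lt y hm
  have hmod : (x % m + y % m) % m = z % m := by rw [← Nat.add_mod, h]
  have hma : m * (x / m + y / m) = m * (x / m) + m * (y / m) := Nat.mul_add m _ _
  have hma1 : m * (x / m + y / m + 1) = m * (x / m) + m * (y / m) + m := by
    rw [Nat.mul_add, Nat.mul_add, Nat.mul_one]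
  rcases Nat.lt_or_ge (x % m + y % m) m with hlt | hge
  · left
    have hr : x % m + y % m = z % m := by rw [← hmod, Nat.mod_eq_of_lt hlt]
    refine ⟨hr, Nat.eq_of_mul_eq_mul_left hm ?_⟩
    omega
  · right
    have hsub : (x % m + y % m) % m = x % m + y % m - m := by
      rw [Nat.mod_eq_sub_mod hge, Nat.mod_eq_of_lt (by omega)]
    have hr : x % m + y % m = z % m + m := by omega
    refine ⟨hr, Nat.eq_of_mul_eq_mul_left hm ?_⟩
    omega

private lemma count_ineq (m a0 a1 a2 a3 : ℕ) (hm : 0 < m)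
    (h1 : 0 < a1) (h2 : 0 < a2) (h3 : 0 < a3) (h0 : 0 < a0)
    (h10 : a1 ≤ a0) (h20 : a2 ≤ a0) (h30 : a3 ≤ a0)
    (h13 : a0 ≤ a1 + a3) (h23 : a0 ≤ a2 + a3) (h12 : a0 ≤ a1 + a2) :
    (a0 - a1) / m + (a1 + a3 - a0) / m + (a0 - a2) / m + (a2 + a3 - a0) / m +
      (a0 - a3) / m + (a1 + a2 - a0) / m ≤
    (if m ∣ a1 then 1 else 0) + (if m ∣ (a2 + a3) then 1 else 0) +
      (a0 - 1) / m + (a1 + a2 + a3 - a0 - 1) / m := by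
  rcases Nat.eq_or_lt_of_le hm with hm1 | hm2
  · simp only [← hm1, Nat.div_one, Nat.one_dvd, if_true]
    omega
  · have K1 := key_split m (a0 - a1) (a1 + a3 - a0) a3 hm (by omega)
    have K2 := key_split m a3 (a0 - a3) a0 hm (by omega)
    have K3 := key_split m (a1 + a3 - a0) (a0 - a3) a1 hm (by omega)
    have K5 := key_split m (a0 - a2) (a2 + a3 - a0) a3 hm (by omega)
    have K6 := key_split m a3 (a1 + a2 - a0) (a1 + a2 + a3 - a0) hm (by omega)
    have K7 := key_split m (a2 + a3 - a0) a0 (a2 + a3) hm (by omega)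
    have K9 := key_split m (a0 - a1) (a1 + a2 - a0) a2 hm (by omega)
    have K10 := key_split m (a0 - a2) a2 a0 hm (by omega)
    have K15 := key_split m (a0 - 1) 1 a0 hm (by omega)
    have K16 := key_split m (a1 + a2 + a3 - a0 - 1) 1 (a1 + a2 + a3 - a0) hm (by omega)
    have h1m : 1 % m = 1 := Nat.mod_eq_of_lt hm2
    have e1 : (if m ∣ a1 then 1 else 0) = (if a1 % m = 0 then 1 else 0) := by
      simp [Nat.dvd_iff_mod_eq_zero]
    have e23 : (if m ∣ (a2 + a3) then 1 else 0) = (if (a2 + a3) % m = 0 then 1 else 0) := by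
      simp [Nat.dvd_iff_mod_eq_zero]
    have h1d : 1 / m = 0 := Nat.div_eq_of_lt hm2
    have c1 := Nat.mod_lt (a0 - a1) hm
    have c2 := Nat.mod_lt (a1 + a3 - a0) hm
    have c3 := Nat.mod_lt (a0 - a2) hm
    have c4 := Nat.mod_lt (a2 + a3 - a0) hm
    have c5 := Nat.mod_lt (a0 - a3) hm
    have c6 := Nat.mod_lt (a1 + a2 - a0) hm
    have c7 := Nat.mod_lt (a0 - 1) hm
    have c8 := Nat.mod_lt (a1 + a2 + a3 - a0 - 1) hm
    have c9 := Nat.mod_lt a2 hm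
    have c10 := Nat.mod_lt a3 hm
    have b0 := Nat.mod_lt a0 hm
    have bs := Nat.mod_lt (a1 + a2 + a3 - a0) hm
    have b1 := Nat.mod_lt a1 hm
    have b23 := Nat.mod_lt (a2 + a3) hm
    rw [e1, e23]
    rcases K1 with ⟨p1, p2⟩ | ⟨p1, p2⟩ <;>
      rcases K2 with ⟨p3, p4⟩ | ⟨p3, p4⟩ <;>
      rcases K5 with ⟨p5, p6⟩ | ⟨p5, p6⟩ <;>
      rcases K6 with ⟨p7, p8⟩ | ⟨p7, p8⟩ <;>
      rcases K15 with ⟨p9, p10⟩ | ⟨p9, p10⟩ <;>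
      rcases K16 with ⟨p11, p12⟩ | ⟨p11, p12⟩ <;>
      split_ifs <;> omega


private lemma cyc_expand (M k : ℕ) (hk : 0 < k) (hkM : k ≤ M) :
    (Polynomial.X ^ k - 1 : Polynomial ℤ) =
      ∏ e ∈ Finset.Icc 1 M, Polynomial.cyclotomic e ℤ ^ (if e ∣ k then 1 else 0) := by
  have h1 : ∏ e ∈ Finset.Icc 1 M, Polynomial.cyclotomic e ℤ ^ (if e ∣ k then 1 else 0)
      = ∏ e ∈ (Finset.Icc 1 M).filter (· ∣ k), Polynomial.cyclotomic e ℤ := by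
    rw [Finset.prod_filter]
    refine Finset.prod_congr rfl fun e _ => ?_
    split_ifs <;> simp
  have h2 : (Finset.Icc 1 M).filter (· ∣ k) = Nat.divisors k := by
    ext e
    simp only [Finset.mem_filter, Finset.mem_Icc, Nat.mem_divisors]
    constructor
    · rintro ⟨⟨-, -⟩, hd⟩; exact ⟨hd, hk.ne'⟩
    · rintro ⟨hd, -⟩
      exact ⟨⟨Nat.pos_of_dvd_of_pos hd hk, le_trans (Nat.le_of_dvd hk hd) hkM⟩, hd⟩
  rw [h1, h2, Polynomial.prod_cyclotomic_eq_X_pow_sub_one hk]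

private lemma prod_expand (M : ℕ) (s : Finset ℕ) (f : ℕ → ℕ)
    (hf : ∀ i ∈ s, 0 < f i ∧ f i ≤ M) :
    ∏ i ∈ s, ((Polynomial.X : Polynomial ℤ) ^ f i - 1) =
      ∏ e ∈ Finset.Icc 1 M, Polynomial.cyclotomic e ℤ ^ (∑ i ∈ s, if e ∣ f i then 1 else 0) := by
  calc ∏ i ∈ s, ((Polynomial.X : Polynomial ℤ) ^ f i - 1)
      = ∏ i ∈ s, ∏ e ∈ Finset.Icc 1 M, Polynomial.cyclotomic e ℤ ^ (if e ∣ f i then 1 else 0) :=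
        Finset.prod_congr rfl fun i hi => cyc_expand M (f i) (hf i hi).1 (hf i hi).2
    _ = ∏ e ∈ Finset.Icc 1 M, ∏ i ∈ s, Polynomial.cyclotomic e ℤ ^ (if e ∣ f i then 1 else 0) :=
        Finset.prod_comm
    _ = _ := Finset.prod_congr rfl fun e _ => Finset.prod_pow_eq_pow_sum _ _ _

private lemma sum_ite_dvd (d N : ℕ) :
    (∑ i ∈ Finset.range N, if d ∣ (i + 1) then 1 else 0) = N / d := by
  rw [← Nat.Ioc_filter_dvd_card_eq_div, Finset.card_filter]
  have h : Finset.Ioc 0 N = Finset.Ico 1 (N + 1) := by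
    ext a; simp [Finset.mem_Ioc, Finset.mem_Ico]; omega
  rw [h, Finset.sum_Ico_eq_sum_range]
  simp [Nat.add_comm]

private lemma dvd_two_mul_odd (e k : ℕ) (he : Odd e) : e ∣ 2 * k ↔ e ∣ k := by
  constructor
  · intro h
    exact Nat.Coprime.dvd_of_dvd_mul_left (Nat.coprime_two_right.mpr he) h
  · exact fun h => h.mul_left 2

private noncomputable def Gz (n : ℕ) : Polynomial ℤ := Polynomial.X ^ (2 * n) - 1

private noncomputable def Ffz (n : ℕ) : Polynomial ℤ := ∏ i ∈ Finset.range n, Gz (i + 1)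

private def Tn (n : ℕ) : ℕ := ∑ i ∈ Finset.range n, (i + 1)

private noncomputable def ψ : Polynomial ℤ →+* RatFunc ℚ :=
  (algebraMap (Polynomial ℚ) (RatFunc ℚ)).comp (Polynomial.mapRingHom (Int.castRingHom ℚ))

private lemma ψ_X : ψ Polynomial.X = RatFunc.X := by
  simp [ψ, RatFunc.algebraMap_X]

private lemma ψ_inj : Function.Injective ψ := by
  unfold ψ
  rw [RingHom.coe_comp]
  exact (RatFunc.algebraMap_injective ℚ).comp
    (Polynomial.map_injective _ fun a b h => by simpa using h)

private lemma ψ_ne_zero {P : Polynomial ℤ} (h : P ≠ 0) : ψ P ≠ 0 := by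
  intro hz
  exact h (ψ_inj (by rw [hz, map_zero]))

private lemma Gz_ne_zero {n : ℕ} (h : 0 < n) : Gz n ≠ 0 := by
  have : (Polynomial.X ^ (2 * n) - Polynomial.C (1 : ℤ)).Monic :=
    Polynomial.monic_X_pow_sub_C 1 (by omega)
  simpa [Gz] using this.ne_zero

private lemma Ffz_ne_zero (n : ℕ) : Ffz n ≠ 0 := by
  unfold Ffz
  refine Finset.prod_ne_zero_iff.mpr fun i _ => Gz_ne_zero (by omega)

private lemma Ffz_succ (n : ℕ) : Ffz (n + 1) = Ffz n * Gz (n + 1) :=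
  Finset.prod_range_succ _ _

private lemma Tn_succ (n : ℕ) : Tn (n + 1) = Tn n + (n + 1) :=
  Finset.sum_range_succ _ _

private lemma qint_eq (n : ℕ) :
    qint RatFunc.X (n : ℤ) = ψ (Gz n) / RatFunc.X ^ n := by
  have hX : (RatFunc.X : RatFunc ℚ) ≠ 0 := RatFunc.X_ne_zero
  have hψ : ψ (Gz n) = RatFunc.X ^ (2 * n) - 1 := by
    simp [Gz, map_sub, map_pow, map_one, ψ_X]
  rw [qint, hψ, zpow_neg, zpow_natCast]
  rw [eq_div_iff (pow_ne_zero n hX), sub_mul, inv_mul_cancel₀ (pow_ne_zero n hX),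
    ← pow_add]
  rw [show n + n = 2 * n by omega]

private lemma qfact_eq (n : ℕ) :
    qfact RatFunc.X (n : ℤ) = ψ (Ffz n) / RatFunc.X ^ (Tn n) := by
  rw [qfact, Int.toNat_natCast]
  have h : ∀ i ∈ Finset.range n,
      qint RatFunc.X ((i : ℤ) + 1) = ψ (Gz (i + 1)) / RatFunc.X ^ (i + 1) := by
    intro i _
    rw [show ((i : ℤ) + 1) = ((i + 1 : ℕ) : ℤ) by push_cast; ring, qint_eq]
  rw [Finset.prod_congr rfl h, Finset.prod_div_distrib, ← map_prod,
    Finset.prod_pow_eq_pow_sum]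
  rfl

private lemma main_dvd (a0 a1 a2 a3 : ℕ)
    (h1 : 0 < a1) (h2 : 0 < a2) (h3 : 0 < a3) (h0 : 0 < a0)
    (h10 : a1 ≤ a0) (h20 : a2 ≤ a0) (h30 : a3 ≤ a0)
    (h13 : a0 ≤ a1 + a3) (h23 : a0 ≤ a2 + a3) (h12 : a0 ≤ a1 + a2) :
    Ffz (a0 - a1) * Ffz (a1 + a3 - a0) * Ffz (a0 - a2) * Ffz (a2 + a3 - a0) *
      Ffz (a0 - a3) * Ffz (a1 + a2 - a0) ∣
    Gz a1 * Gz (a2 + a3) * Ffz (a0 - 1) * Ffz (a1 + a2 + a3 - a0 - 1) := by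
  set M := 2 * (a1 + a2 + a3) with hM
  have hFf : ∀ n : ℕ, 2 * n ≤ M → Ffz n = ∏ e ∈ Finset.Icc 1 M,
      Polynomial.cyclotomic e ℤ ^ (∑ i ∈ Finset.range n, if e ∣ 2 * (i + 1) then 1 else 0) := by
    intro n hn
    simp only [Ffz, Gz]
    refine prod_expand M (Finset.range n) (fun i => 2 * (i + 1)) ?_
    intro i hi
    simp only [Finset.mem_range] at hi
    refine ⟨?_, ?_⟩ <;> (beta_reduce; omega)
  have hG : ∀ k : ℕ, 0 < k → 2 * k ≤ M → Gz k = ∏ e ∈ Finset.Icc 1 M,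
      Polynomial.cyclotomic e ℤ ^ (if e ∣ 2 * k then 1 else 0) := by
    intro k hk hkM
    simp only [Gz]
    exact cyc_expand M (2 * k) (by omega) hkM
  rw [hFf (a0 - a1) (by omega), hFf (a1 + a3 - a0) (by omega), hFf (a0 - a2) (by omega),
    hFf (a2 + a3 - a0) (by omega), hFf (a0 - a3) (by omega), hFf (a1 + a2 - a0) (by omega),
    hFf (a0 - 1) (by omega), hFf (a1 + a2 + a3 - a0 - 1) (by omega),
    hG a1 (by omega) (by omega), hG (a2 + a3) (by omega) (by omega)]
  rw [← Finset.prod_mul_distrib, ← Finset.prod_mul_distrib, ← Finset.prod_mul_distrib,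
    ← Finset.prod_mul_distrib, ← Finset.prod_mul_distrib, ← Finset.prod_mul_distrib,
    ← Finset.prod_mul_distrib, ← Finset.prod_mul_distrib]
  refine Finset.prod_dvd_prod_of_dvd _ _ fun e he => ?_
  simp only [Finset.mem_Icc] at he
  simp only [← pow_add]
  apply pow_dvd_pow
  rcases Nat.even_or_odd e with ⟨f, hf⟩ | ho
  · have hfpos : 0 < f := by omega
    have hiff : ∀ x : ℕ, e ∣ 2 * x ↔ f ∣ x := by
      intro x
      rw [show e = 2 * f by omega]
      exact Nat.mul_dvd_mul_iff_left (by omega)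
    simp only [hiff, sum_ite_dvd]
    exact count_ineq f a0 a1 a2 a3 hfpos h1 h2 h3 h0 h10 h20 h30 h13 h23 h12
  · have hiff : ∀ x : ℕ, e ∣ 2 * x ↔ e ∣ x := fun x => dvd_two_mul_odd e x ho
    simp only [hiff, sum_ite_dvd]
    exact count_ineq e a0 a1 a2 a3 (by omega) h1 h2 h3 h0 h10 h20 h30 h13 h23 h12

theorem stmt11 (d₀ d₁ d₂ d₃ : ℤ) (h0 : 0 < d₀) (h1 : 0 < d₁) (h2 : 0 < d₂)
    (h3 : 0 < d₃) (h10 : d₁ ≤ d₀) (h20 : d₂ ≤ d₀) (h30 : d₃ ≤ d₀)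
    (h13 : d₀ ≤ d₁ + d₃) (h23 : d₀ ≤ d₂ + d₃) (h33 : d₃ ≤ d₁ + d₂ + d₃ - d₀) :
    ∃ (p : Polynomial ℤ) (N : ℕ),
      (qint RatFunc.X d₁ * qint RatFunc.X (d₂ + d₃)) /
          (qint RatFunc.X d₀ * qint RatFunc.X (d₁ + d₂ + d₃ - d₀)) *
        (qbinom RatFunc.X d₃ (d₀ - d₁) * qbinom RatFunc.X d₃ (d₀ - d₂) *
          qbinom RatFunc.X d₀ d₃ * qbinom RatFunc.X (d₁ + d₂ + d₃ - d₀) d₃) =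
      algebraMap (Polynomial ℚ) (RatFunc ℚ) (p.map (Int.castRingHom ℚ)) /
        RatFunc.X ^ N := by
  have hX : (RatFunc.X : RatFunc ℚ) ≠ 0 := RatFunc.X_ne_zero
  lift d₀ to ℕ using h0.le with a0
  lift d₁ to ℕ using h1.le with a1
  lift d₂ to ℕ using h2.le with a2
  lift d₃ to ℕ using h3.le with a3
  obtain ⟨c, hc⟩ := main_dvd a0 a1 a2 a3 (by omega) (by omega) (by omega) (by omega)
    (by omega) (by omega) (by omega) (by omega) (by omega) (by omega)
  refine ⟨c * Polynomial.X ^ (Tn (a0 - a1) + Tn (a1 + a3 - a0) + Tn (a0 - a2) +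
      Tn (a2 + a3 - a0) + Tn (a0 - a3) + Tn (a1 + a2 - a0)),
    a1 + (a2 + a3) + Tn (a0 - 1) + Tn (a1 + a2 + a3 - a0 - 1), ?_⟩
  have hmap : ∀ p : Polynomial ℤ,
      algebraMap (Polynomial ℚ) (RatFunc ℚ) (p.map (Int.castRingHom ℚ)) = ψ p :=
    fun p => rfl
  rw [hmap]
  -- unfold the four qbinom (conditions hold)
  have e1 : qbinom RatFunc.X (a3 : ℤ) ((a0 : ℤ) - (a1 : ℤ)) =
      qfact RatFunc.X (a3 : ℤ) /
        (qfact RatFunc.X ((a0 : ℤ) - (a1 : ℤ)) *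
         qfact RatFunc.X ((a3 : ℤ) - ((a0 : ℤ) - (a1 : ℤ)))) := by
    rw [qbinom, if_pos]; exact ⟨by omega, by omega⟩
  have e2 : qbinom RatFunc.X (a3 : ℤ) ((a0 : ℤ) - (a2 : ℤ)) =
      qfact RatFunc.X (a3 : ℤ) /
        (qfact RatFunc.X ((a0 : ℤ) - (a2 : ℤ)) *
         qfact RatFunc.X ((a3 : ℤ) - ((a0 : ℤ) - (a2 : ℤ)))) := by
    rw [qbinom, if_pos]; exact ⟨by omega, by omega⟩
  have e3 : qbinom RatFunc.X (a0 : ℤ) (a3 : ℤ) =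
      qfact RatFunc.X (a0 : ℤ) /
        (qfact RatFunc.X (a3 : ℤ) * qfact RatFunc.X ((a0 : ℤ) - (a3 : ℤ))) := by
    rw [qbinom, if_pos]; exact ⟨by omega, by omega⟩
  have e4 : qbinom RatFunc.X ((a1 : ℤ) + (a2 : ℤ) + (a3 : ℤ) - (a0 : ℤ)) (a3 : ℤ) =
      qfact RatFunc.X ((a1 : ℤ) + (a2 : ℤ) + (a3 : ℤ) - (a0 : ℤ)) /
        (qfact RatFunc.X (a3 : ℤ) *
         qfact RatFunc.X ((a1 : ℤ) + (a2 : ℤ) + (a3 : ℤ) - (a0 : ℤ) - (a3 : ℤ))) := by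
    rw [qbinom, if_pos]; exact ⟨by omega, by omega⟩
  rw [e1, e2, e3, e4]
  -- normalize integer arguments to casts of naturals
  rw [show (a3 : ℤ) - ((a0 : ℤ) - (a1 : ℤ)) = ((a1 + a3 - a0 : ℕ) : ℤ) by omega,
    show (a3 : ℤ) - ((a0 : ℤ) - (a2 : ℤ)) = ((a2 + a3 - a0 : ℕ) : ℤ) by omega,
    show (a0 : ℤ) - (a1 : ℤ) = ((a0 - a1 : ℕ) : ℤ) by omega,
    show (a0 : ℤ) - (a2 : ℤ) = ((a0 - a2 : ℕ) : ℤ) by omega,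
    show (a0 : ℤ) - (a3 : ℤ) = ((a0 - a3 : ℕ) : ℤ) by omega,
    show (a1 : ℤ) + (a2 : ℤ) + (a3 : ℤ) - (a0 : ℤ) = ((a1 + a2 + a3 - a0 : ℕ) : ℤ) by omega,
    show ((a1 + a2 + a3 - a0 : ℕ) : ℤ) - (a3 : ℤ) = ((a1 + a2 - a0 : ℕ) : ℤ) by omega,
    show (a2 : ℤ) + (a3 : ℤ) = ((a2 + a3 : ℕ) : ℤ) by omega]
  simp only [qint_eq, qfact_eq]
  -- expand Ffz a0, Ffz s
  have hFa0 : Ffz a0 = Ffz (a0 - 1) * Gz a0 := by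
    conv_lhs => rw [show a0 = (a0 - 1) + 1 by omega, Ffz_succ,
      show (a0 - 1) + 1 = a0 by omega]
  have hTa0 : Tn a0 = Tn (a0 - 1) + a0 := by
    conv_lhs => rw [show a0 = (a0 - 1) + 1 by omega, Tn_succ,
      show (a0 - 1) + 1 = a0 by omega]
  have hFs : Ffz (a1 + a2 + a3 - a0) =
      Ffz (a1 + a2 + a3 - a0 - 1) * Gz (a1 + a2 + a3 - a0) := by
    conv_lhs => rw [show a1 + a2 + a3 - a0 = (a1 + a2 + a3 - a0 - 1) + 1 by omega, Ffz_succ,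
      show (a1 + a2 + a3 - a0 - 1) + 1 = a1 + a2 + a3 - a0 by omega]
  have hTs : Tn (a1 + a2 + a3 - a0) =
      Tn (a1 + a2 + a3 - a0 - 1) + (a1 + a2 + a3 - a0) := by
    conv_lhs => rw [show a1 + a2 + a3 - a0 = (a1 + a2 + a3 - a0 - 1) + 1 by omega, Tn_succ,
      show (a1 + a2 + a3 - a0 - 1) + 1 = a1 + a2 + a3 - a0 by omega]
  rw [hFa0, hTa0, hFs, hTs]
  have hψc := congrArg ψ hc
  simp only [map_mul] at hψc
  have n1 : ψ (Gz a1) ≠ 0 := ψ_ne_zero (Gz_ne_zero (by omega))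
  have n2 : ψ (Gz (a2 + a3)) ≠ 0 := ψ_ne_zero (Gz_ne_zero (by omega))
  have n3 : ψ (Gz a0) ≠ 0 := ψ_ne_zero (Gz_ne_zero (by omega))
  have n4 : ψ (Gz (a1 + a2 + a3 - a0)) ≠ 0 := ψ_ne_zero (Gz_ne_zero (by omega))
  have m1 : ∀ k : ℕ, ψ (Ffz k) ≠ 0 := fun k => ψ_ne_zero (Ffz_ne_zero k)
  field_simp
  simp only [map_mul, map_pow, ψ_X]
  rw [div_eq_iff (by
    repeat' apply mul_ne_zero
    all_goals first
      | exact pow_ne_zero _ hX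
      | exact m1 _
      | exact n3
      | exact n4)]
  linear_combination (ψ (Ffz a3) * ψ (Gz a0) * ψ (Gz (a1 + a2 + a3 - a0)) *
    RatFunc.X ^ (a0 + (a1 + a2 + a3 - a0) + Tn (a0 - a1) + Tn (a1 + a3 - a0) +
      Tn (a0 - a2) + Tn (a2 + a3 - a0) + Tn (a0 - a3) + Tn (a1 + a2 - a0) +
      (a1 + (a2 + a3) + Tn (a0 - 1) + Tn (a1 + a2 + a3 - a0 - 1)))) * hψc
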